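/- Let Y be a finitely ramified fractal which is topologically rigid and whose metric d_Y is undistorted. Let (X, d_X) be a metric space and let h : X → Y be a homeomorphism; equip X with the finitely ramified cell structure pulled back along h (the n-cells of X are the preimages under h of the n-cells of Y). Then there exists a quasisymmetry from (X, d_X) to (Y, d_Y) if and only if d_X is undistorted with respect to this pulled-back cell structure. -/

import Mathlib

open Set

/-- A finitely ramified cell structure on a topological space `X`: a locally finite,
level-indexed family of "cells", where each cell is compact, connected, with nonempty
interior, the unique `0`-cell is all of `X`, every `(n+1)`-cell lies in some `n`-cell,
each `n`-cell is the union of the `(n+1)`-cells it contains, two distinct cells of the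
same level meet in a finite set, and every infinite descending chain of cells
intersects in a single point. -/
structure CellStructure (X : Type*) [TopologicalSpace X] where
  cells : ℕ → Set (Set X)
  finite_cells : ∀ n, (cells n).Finite
  isCompact_cells : ∀ n, ∀ E ∈ cells n, IsCompact E
  isConnected_cells : ∀ n, ∀ E ∈ cells n, IsConnected E
  interior_nonempty : ∀ n, ∀ E ∈ cells n, (interior E).Nonempty
  root : cells 0 = {Set.univ}
  exists_parent : ∀ n, ∀ E' ∈ cells (n + 1), ∃ E ∈ cells n, E' ⊆ E
  eq_sUnion_children : ∀ n, ∀ E ∈ cells n, E = ⋃₀ {E' | E' ∈ cells (n + 1) ∧ E' ⊆ E}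
  inter_finite : ∀ n, ∀ E₁ ∈ cells n, ∀ E₂ ∈ cells n, E₁ ≠ E₂ → (E₁ ∩ E₂).Finite
  descending_singleton : ∀ E : ℕ → Set X, (∀ n, E n ∈ cells n) → (∀ n, E (n + 1) ⊆ E n) →
    ∃ p : X, (⋂ n, E n) = {p}

/-- `d` is a metric (distance function) on the set `X`. -/
def IsMetricOn {X : Type*} (d : X → X → ℝ) : Prop :=
  (∀ x y, 0 ≤ d x y) ∧ (∀ x y, d x y = 0 ↔ x = y) ∧ (∀ x y, d x y = d y x) ∧
    ∀ x y z, d x z ≤ d x y + d y z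

/-- The distance function `d` induces the given topology on `X`. -/
def InducesTopology {X : Type*} [TopologicalSpace X] (d : X → X → ℝ) : Prop :=
  ∀ s : Set X, IsOpen s ↔ ∀ x ∈ s, ∃ ε > 0, ∀ y, d x y < ε → y ∈ s

/-- The diameter of a set with respect to a distance function. -/
noncomputable def sdiam {X : Type*} (d : X → X → ℝ) (S : Set X) : ℝ :=
  sSup (Set.image2 d S S)

/-- The distance between two sets with respect to a distance function. -/
noncomputable def sdist {X : Type*} (d : X → X → ℝ) (S T : Set X) : ℝ :=
  sInf (Set.image2 d S T)

/-- The distance function `d` is `(r,R,C,δ)`-undistorted with respect to the family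
of cells `cells`: exponential decay of diameter ratios of intersecting cells, and
cell separation for disjoint cells of the same level. -/
def IsUndistortedWith {X : Type*} (cells : ℕ → Set (Set X)) (d : X → X → ℝ)
    (r R C δ : ℝ) : Prop :=
  0 < r ∧ r ≤ R ∧ R < 1 ∧ 1 ≤ C ∧ 0 < δ ∧
    (∀ m n : ℕ, m ≤ n → ∀ E ∈ cells m, ∀ E' ∈ cells n, (E ∩ E').Nonempty →
      r ^ (n - m) / C ≤ sdiam d E' / sdiam d E ∧
        sdiam d E' / sdiam d E ≤ C * R ^ (n - m)) ∧
    ∀ n : ℕ, ∀ E₁ ∈ cells n, ∀ E₂ ∈ cells n, Disjoint E₁ E₂ →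
      δ * sdiam d E₁ ≤ sdist d E₁ E₂

/-- `d` is undistorted if it is `(r,R,C,δ)`-undistorted for some constants. -/
def IsUndistorted {X : Type*} (cells : ℕ → Set (Set X)) (d : X → X → ℝ) : Prop :=
  ∃ r R C δ : ℝ, IsUndistortedWith cells d r R C δ

/-- `η` is a homeomorphism of `[0,∞)` onto itself (equivalently: a continuous,
strictly increasing surjection of `[0,∞)` onto `[0,∞)` fixing `0`). -/
def IsQSGauge (η : ℝ → ℝ) : Prop :=
  ContinuousOn η (Set.Ici 0) ∧ StrictMonoOn η (Set.Ici 0) ∧ η 0 = 0 ∧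
    Set.MapsTo η (Set.Ici 0) (Set.Ici 0) ∧ Set.SurjOn η (Set.Ici 0) (Set.Ici 0)

/-- The `η`-quasisymmetry inequality for a map `f` between sets carrying
distance functions `dX` and `dY`. -/
def QSIneq {X Y : Type*} (dX : X → X → ℝ) (dY : Y → Y → ℝ) (f : X → Y) (η : ℝ → ℝ) : Prop :=
  ∀ a b c : X, a ≠ b → a ≠ c → b ≠ c →
    dY (f a) (f b) / dY (f a) (f c) ≤ η (dX a b / dX a c)


set_option maxHeartbeats 2000000
section Aux

variable {Z : Type*} (d : Z → Z → ℝ)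

lemma sdiam_nonneg (h0 : ∀ x y, 0 ≤ d x y) (S : Set Z) : 0 ≤ sdiam d S :=
  Real.sSup_nonneg (by rintro x ⟨a, _, b, _, rfl⟩; exact h0 a b)

lemma le_sdiam {B : ℝ} (hB : ∀ x y, d x y ≤ B) {S : Set Z} {x y : Z}
    (hx : x ∈ S) (hy : y ∈ S) : d x y ≤ sdiam d S :=
  le_csSup ⟨B, by rintro v ⟨a, _, b, _, rfl⟩; exact hB a b⟩ ⟨x, hx, y, hy, rfl⟩

lemma sdiam_le {S : Set Z} {c : ℝ} (hc : 0 ≤ c) (H : ∀ x ∈ S, ∀ y ∈ S, d x y ≤ c) :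
    sdiam d S ≤ c :=
  Real.sSup_le (by rintro v ⟨a, ha, b, hb, rfl⟩; exact H a ha b hb) hc

lemma sdist_le (h0 : ∀ x y, 0 ≤ d x y) {S T : Set Z} {x y : Z}
    (hx : x ∈ S) (hy : y ∈ T) : sdist d S T ≤ d x y :=
  csInf_le ⟨0, by rintro v ⟨a, _, b, _, rfl⟩; exact h0 a b⟩ ⟨x, hx, y, hy, rfl⟩

lemma sdiam_empty : sdiam d (∅ : Set Z) = 0 := by
  simp [sdiam, Real.sSup_empty]

end Aux

lemma pow_log_trans {p ρ z : ℝ} (k : ℕ) (hp : 0 < p) (hρ : 0 < ρ)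
    (hc : 0 < Real.log ρ / Real.log p) (hz : 0 < z) (h : p ^ k ≤ z) :
    ρ ^ k ≤ z ^ (Real.log ρ / Real.log p) := by
  have hlp : Real.log p ≠ 0 := by
    intro h0; rw [h0, div_zero] at hc; exact lt_irrefl 0 hc
  have h1 : (k : ℝ) * Real.log p ≤ Real.log z := by
    have := Real.log_le_log (pow_pos hp k) h
    rwa [Real.log_pow] at this
  have h2 : (k : ℝ) * Real.log ρ ≤ Real.log z * (Real.log ρ / Real.log p) := by
    have := mul_le_mul_of_nonneg_right h1 hc.le
    calc (k : ℝ) * Real.log ρ = (k : ℝ) * Real.log p * (Real.log ρ / Real.log p) := by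
          field_simp
      _ ≤ Real.log z * (Real.log ρ / Real.log p) := this
  calc ρ ^ k = ρ ^ ((k : ℝ)) := (Real.rpow_natCast ρ k).symm
    _ = Real.exp (Real.log ρ * k) := Real.rpow_def_of_pos hρ _
    _ ≤ Real.exp (Real.log z * (Real.log ρ / Real.log p)) := by
        apply Real.exp_le_exp.2; linarith [h2, mul_comm (Real.log ρ) (k : ℝ)]
    _ = z ^ (Real.log ρ / Real.log p) := (Real.rpow_def_of_pos hz _).symm

lemma isQSGauge_pow (M K α β : ℝ) (hM : 0 < M) (hK : 0 < K) (hα : 0 < α) (hβ : 0 < β) :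
    IsQSGauge (fun t => M * ((K * t) ^ α + (K * t) ^ β)) := by
  set η : ℝ → ℝ := fun t => M * ((K * t) ^ α + (K * t) ^ β) with hηdef
  have hcont : ContinuousOn η (Set.Ici 0) := by
    intro t ht
    have h1 : ∀ γ : ℝ, 0 < γ → ContinuousAt (fun s : ℝ => (K * s) ^ γ) t := by
      intro γ hγ
      have : ContinuousAt (fun x : ℝ => x ^ γ) (K * t) :=
        Real.continuousAt_rpow_const _ _ (Or.inr hγ.le)
      exact this.comp ((continuous_const.mul continuous_id).continuousAt)
    exact (ContinuousAt.mul continuousAt_const ((h1 α hα).add (h1 β hβ))).continuousWithinAt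
  have hmono : StrictMonoOn η (Set.Ici 0) := by
    intro s hs t ht hst
    have h1 : ∀ γ : ℝ, 0 < γ → (K * s) ^ γ < (K * t) ^ γ := fun γ hγ =>
      Real.rpow_lt_rpow (mul_nonneg hK.le (Set.mem_Ici.1 hs))
        (by nlinarith [Set.mem_Ici.1 hs]) hγ
    have := h1 α hα; have := h1 β hβ
    simp only [hηdef]; nlinarith
  have hzero : η 0 = 0 := by
    simp [hηdef, Real.zero_rpow hα.ne', Real.zero_rpow hβ.ne']
  have hmaps : Set.MapsTo η (Set.Ici 0) (Set.Ici 0) := by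
    intro t ht
    have h1 : (0:ℝ) ≤ (K * t) ^ α := Real.rpow_nonneg (mul_nonneg hK.le (Set.mem_Ici.1 ht)) _
    have h2 : (0:ℝ) ≤ (K * t) ^ β := Real.rpow_nonneg (mul_nonneg hK.le (Set.mem_Ici.1 ht)) _
    simp only [Set.mem_Ici, hηdef]; nlinarith
  refine ⟨hcont, hmono, hzero, hmaps, ?_⟩
  intro y hy
  have hy0 : (0:ℝ) ≤ y := hy
  set T : ℝ := K⁻¹ * (y / M) ^ (α⁻¹) with hT
  have hT0 : 0 ≤ T := by positivity
  have hηT : y ≤ η T := by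
    have hKT : K * T = (y / M) ^ (α⁻¹) := by
      rw [hT]; field_simp
    have h1 : (K * T) ^ α = y / M := by
      rw [hKT, ← Real.rpow_mul (by positivity), inv_mul_cancel₀ hα.ne', Real.rpow_one]
    have h2 : (0:ℝ) ≤ (K * T) ^ β := Real.rpow_nonneg (by positivity) _
    have : η T = M * (y / M + (K * T) ^ β) := by rw [hηdef]; simp [h1]
    rw [this]
    have hyM : M * (y / M) = y := by field_simp
    nlinarith
  have := intermediate_value_Icc hT0 (hcont.mono (fun s hs => hs.1))
  have hmem : y ∈ Set.Icc (η 0) (η T) := ⟨by rw [hzero]; exact hy0, hηT⟩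
  obtain ⟨t, ht, hty⟩ := this hmem
  exact ⟨t, ht.1, hty⟩

/-- Bundled context: an undistorted metric-like structure on a family of cells. -/
structure UndCtx (Z : Type*) where
  cells : ℕ → Set (Set Z)
  d : Z → Z → ℝ
  r : ℝ
  R : ℝ
  C : ℝ
  δ : ℝ
  und : IsUndistortedWith cells d r R C δ
  met : IsMetricOn d
  B : ℝ
  bdd : ∀ x y, d x y ≤ B
  cellne : ∀ n, ∀ E ∈ cells n, E.Nonempty
  cover : ∀ n (x : Z), ∃ E ∈ cells n, x ∈ E
  rootmem : Set.univ ∈ cells 0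

namespace UndCtx

variable {Z : Type*} (c : UndCtx Z)

lemma rpos : 0 < c.r := c.und.1
lemma rleR : c.r ≤ c.R := c.und.2.1
lemma Rlt1 : c.R < 1 := c.und.2.2.1
lemma Cge1 : 1 ≤ c.C := c.und.2.2.2.1
lemma Cpos : 0 < c.C := lt_of_lt_of_le one_pos c.Cge1
lemma δpos : 0 < c.δ := c.und.2.2.2.2.1
lemma Rpos : 0 < c.R := lt_of_lt_of_le c.rpos c.rleR
lemma rlt1 : c.r < 1 := lt_of_le_of_lt c.rleR c.Rlt1
lemma d_nonneg : ∀ x y, 0 ≤ c.d x y := c.met.1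
lemma d_pos {p q : Z} (h : p ≠ q) : 0 < c.d p q :=
  lt_of_le_of_ne (c.met.1 p q) (fun h0 => h ((c.met.2.1 p q).1 h0.symm))

lemma decay {m n : ℕ} (hmn : m ≤ n) {E E' : Set Z} (hE : E ∈ c.cells m)
    (hE' : E' ∈ c.cells n) (hint : (E ∩ E').Nonempty) :
    c.r ^ (n - m) / c.C ≤ sdiam c.d E' / sdiam c.d E ∧
      sdiam c.d E' / sdiam c.d E ≤ c.C * c.R ^ (n - m) :=
  c.und.2.2.2.2.2.1 m n hmn E hE E' hE' hint

lemma sep {n : ℕ} {E₁ E₂ : Set Z} (h1 : E₁ ∈ c.cells n) (h2 : E₂ ∈ c.cells n)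
    (hd : Disjoint E₁ E₂) : c.δ * sdiam c.d E₁ ≤ sdist c.d E₁ E₂ :=
  c.und.2.2.2.2.2.2 n E₁ h1 E₂ h2 hd

/-- Every cell has positive diameter. -/
lemma diam_pos {n : ℕ} {E : Set Z} (hE : E ∈ c.cells n) : 0 < sdiam c.d E := by
  rcases lt_or_eq_of_le (sdiam_nonneg c.d c.met.1 E) with h | h
  · exact h
  · exfalso
    have hne : (E ∩ E).Nonempty := by
      rw [Set.inter_self]; exact c.cellne n E hE
    have := (c.decay (le_refl n) hE hE hne).1
    rw [Nat.sub_self, pow_zero, ← h, div_zero] at this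
    have : (0:ℝ) < 1 / c.C := div_pos one_pos c.Cpos
    linarith [(c.decay (le_refl n) hE hE hne).1, this]

/-- Diameter comparison for intersecting cells, in multiplicative form:
`r^(n-m) * sdiam E ≤ C * sdiam E'` and `sdiam E' ≤ C * R^(n-m) * sdiam E`. -/
lemma decay_mul {m n : ℕ} (hmn : m ≤ n) {E E' : Set Z} (hE : E ∈ c.cells m)
    (hE' : E' ∈ c.cells n) (hint : (E ∩ E').Nonempty) :
    c.r ^ (n - m) * sdiam c.d E ≤ c.C * sdiam c.d E' ∧
      sdiam c.d E' ≤ c.C * c.R ^ (n - m) * sdiam c.d E := by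
  have hDE := c.diam_pos hE
  obtain ⟨h1, h2⟩ := c.decay hmn hE hE' hint
  constructor
  · rw [div_le_div_iff₀ c.Cpos hDE] at h1
    nlinarith
  · rw [div_le_iff₀ hDE] at h2
    nlinarith

noncomputable def c₁ : ℝ := c.δ * c.r / c.C
noncomputable def c₂ : ℝ := (1 + c.C) * c.C

lemma c₁pos : 0 < c.c₁ := div_pos (mul_pos c.δpos c.rpos) c.Cpos
lemma c₂pos : 0 < c.c₂ := mul_pos (by linarith [c.Cpos]) c.Cpos

end UndCtx

/-- The combinatorial "meeting level" relation. -/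
def meets {Z : Type*} (cells : ℕ → Set (Set Z)) (p q : Z) (n : ℕ) : Prop :=
  ∃ E ∈ cells n, ∃ E' ∈ cells n, p ∈ E ∧ q ∈ E' ∧ (E ∩ E').Nonempty

namespace UndCtx

variable {Z : Type*} (c : UndCtx Z)

/-- If `p, q` lie in intersecting `n`-cells, then `d p q ≤ c₂ * sdiam E₀` for
any `n`-cell `E₀` containing `p`. -/
lemma lemA {p q : Z} {n : ℕ} (hm : meets c.cells p q n) {E₀ : Set Z}
    (hE₀ : E₀ ∈ c.cells n) (hp : p ∈ E₀) : c.d p q ≤ c.c₂ * sdiam c.d E₀ := by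
  obtain ⟨E, hE, E', hE', hpE, hqE', x, hxE, hxE'⟩ := hm
  have hD0 := c.diam_pos hE₀
  have hDE := c.diam_pos hE
  -- E vs E₀ (same level, both contain p)
  have h1 : sdiam c.d E ≤ c.C * sdiam c.d E₀ := by
    have := (c.decay_mul (le_refl n) hE₀ hE ⟨p, hp, hpE⟩).2
    rw [Nat.sub_self, pow_zero, mul_one] at this
    exact this
  -- E' vs E (same level, intersecting)
  have h2 : sdiam c.d E' ≤ c.C * sdiam c.d E := by
    have := (c.decay_mul (le_refl n) hE hE' ⟨x, hxE, hxE'⟩).2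
    rw [Nat.sub_self, pow_zero, mul_one] at this
    exact this
  have h3 : c.d p q ≤ c.d p x + c.d x q := c.met.2.2.2 p x q
  have h4 : c.d p x ≤ sdiam c.d E := le_sdiam c.d c.bdd hpE hxE
  have h5 : c.d x q ≤ sdiam c.d E' := le_sdiam c.d c.bdd hxE' hqE'
  have hC := c.Cpos
  unfold c₂
  nlinarith

/-- If no pair of `(n+1)`-cells containing `p` resp. `q` intersect, then
`c₁ * sdiam E₀ ≤ d p q` for any `n`-cell `E₀` containing `p`. -/
lemma lemB {p q : Z} {n : ℕ} (hm : ¬ meets c.cells p q (n + 1)) {E₀ : Set Z}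
    (hE₀ : E₀ ∈ c.cells n) (hp : p ∈ E₀) : c.c₁ * sdiam c.d E₀ ≤ c.d p q := by
  obtain ⟨F, hF, hpF⟩ := c.cover (n + 1) p
  obtain ⟨G, hG, hqG⟩ := c.cover (n + 1) q
  have hdisj : Disjoint F G := by
    rw [Set.disjoint_iff_inter_eq_empty]
    by_contra hne
    exact hm ⟨F, hF, G, hG, hpF, hqG, Set.nonempty_iff_ne_empty.2 hne⟩
  have hsep := c.sep hF hG hdisj
  have hle : sdist c.d F G ≤ c.d p q := sdist_le c.d c.met.1 hpF hqG
  have hdec := (c.decay_mul (Nat.le_succ n) hE₀ hF ⟨p, hp, hpF⟩).1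
  rw [Nat.succ_sub (le_refl n), Nat.sub_self, pow_one] at hdec
  have hC := c.Cpos
  have hδ := c.δpos
  have hr := c.rpos
  have hDF := c.diam_pos hF
  have hD0 := c.diam_pos hE₀
  unfold c₁
  rw [div_mul_eq_mul_div, div_le_iff₀ hC]
  nlinarith

/-- Existence of the critical level for a pair of distinct points. -/
lemma exists_level {p q : Z} (hpq : p ≠ q) :
    ∃ N, meets c.cells p q N ∧ ¬ meets c.cells p q (N + 1) := by
  classical
  have hdpq : 0 < c.d p q := c.d_pos hpq
  have hP0 : meets c.cells p q 0 :=
    ⟨Set.univ, c.rootmem, Set.univ, c.rootmem, trivial, trivial, ⟨p, trivial, trivial⟩⟩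
  have hD0 := c.diam_pos c.rootmem
  set T : ℝ := c.c₂ * c.C * sdiam c.d Set.univ with hT
  have hTpos : 0 < T := mul_pos (mul_pos c.c₂pos c.Cpos) hD0
  have hbound : ∀ n, meets c.cells p q n → c.d p q ≤ T * c.R ^ n := by
    intro n hm
    obtain ⟨E, hE, E', hE', hpE, hqE', hint⟩ := hm
    have h1 : c.d p q ≤ c.c₂ * sdiam c.d E := c.lemA ⟨E, hE, E', hE', hpE, hqE', hint⟩ hE hpE
    have h2 : sdiam c.d E ≤ c.C * c.R ^ (n - 0) * sdiam c.d Set.univ :=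
      (c.decay_mul (Nat.zero_le n) c.rootmem hE
        ((Set.univ_inter E).symm ▸ (Set.univ_inter E ▸ c.cellne n E hE))).2
    rw [Nat.sub_zero] at h2
    have := c.c₂pos
    rw [hT]; nlinarith
  obtain ⟨b, hb⟩ := exists_pow_lt_of_lt_one (div_pos hdpq hTpos) c.Rlt1
  have hnot : ∀ m, b ≤ m → ¬ meets c.cells p q m := by
    intro m hbm hm
    have h1 := hbound m hm
    have h2 : c.R ^ m ≤ c.R ^ b := pow_le_pow_of_le_one c.Rpos.le c.Rlt1.le hbm
    have h3 : T * c.R ^ b < c.d p q := by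
      rw [lt_div_iff₀ hTpos] at hb; linarith [hb, mul_comm T (c.R ^ b)]
    nlinarith
  refine ⟨Nat.findGreatest (fun n => meets c.cells p q n) b, ?_, ?_⟩
  · exact Nat.findGreatest_spec (Nat.zero_le b) hP0
  · rcases le_or_gt (Nat.findGreatest (fun n => meets c.cells p q n) b + 1) b with hle | hlt
    · exact Nat.findGreatest_is_greatest (Nat.lt_succ_self _) hle
    · exact hnot _ (le_of_lt hlt)

end UndCtx

/-- A metric inducing the topology on a compact space is bounded. -/
lemma bdd_of_compact {Y : Type*} [TopologicalSpace Y] [CompactSpace Y]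
    (dY : Y → Y → ℝ) (hm : IsMetricOn dY) (ht : InducesTopology dY) :
    ∃ B, ∀ x y, dY x y ≤ B := by
  rcases isEmpty_or_nonempty Y with hY | hY
  · exact ⟨0, fun x => (hY.false x).elim⟩
  have hball : ∀ (y : Y) (ε : ℝ), IsOpen {z | dY y z < ε} := by
    intro y ε
    rw [ht]
    intro x hx
    refine ⟨ε - dY y x, by simpa using hx, fun z hz => ?_⟩
    have := hm.2.2.2 y x z
    simp only [Set.mem_setOf_eq] at hx ⊢
    linarith
  have hcov : Set.univ ⊆ ⋃ y : Y, {z | dY y z < 1} := by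
    intro x _
    refine Set.mem_iUnion.2 ⟨x, ?_⟩
    simp [((hm.2.1 x x).2 rfl : dY x x = 0)]
  obtain ⟨t, hts⟩ := isCompact_univ.elim_finite_subcover
    (fun y : Y => {z | dY y z < 1}) (fun y => hball y 1) hcov
  have htne : t.Nonempty := by
    obtain ⟨y0⟩ := hY
    obtain ⟨i, hi⟩ := Set.mem_iUnion₂.1 (hts (Set.mem_univ y0))
    exact ⟨i, hi.1⟩
  set M : ℝ := t.sup' htne fun i => t.sup' htne fun j => dY i j with hM
  refine ⟨M + 2, fun x y => ?_⟩
  obtain ⟨i, hit, hix⟩ := Set.mem_iUnion₂.1 (hts (Set.mem_univ x))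
  obtain ⟨j, hjt, hjy⟩ := Set.mem_iUnion₂.1 (hts (Set.mem_univ y))
  simp only [Set.mem_setOf_eq] at hix hjy
  have h1 : dY x y ≤ dY x i + dY i j + dY j y := by
    have t1 := hm.2.2.2 x i y
    have t2 := hm.2.2.2 i j y
    linarith
  have h2 : dY i j ≤ M := by
    rw [hM]
    calc dY i j ≤ t.sup' htne fun j => dY i j := Finset.le_sup' _ hjt
      _ ≤ _ := Finset.le_sup' (f := fun i => t.sup' htne fun j => dY i j) hit
  have h3 : dY x i = dY i x := hm.2.2.1 x i
  linarith

/-- If both metrics are undistorted with respect to corresponding cell structures,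
the homeomorphism is a quasisymmetry. -/
lemma qs_exists {X Y : Type*} (cX : UndCtx X) (cY : UndCtx Y) (h : X → Y)
    (hinj : Function.Injective h) (hsurj : Function.Surjective h)
    (hc : ∀ n, cX.cells n = (fun E => h ⁻¹' E) '' cY.cells n) :
    ∃ η, IsQSGauge η ∧ QSIneq cX.d cY.d h η := by
  have hmeets : ∀ p q n, meets cX.cells p q n ↔ meets cY.cells (h p) (h q) n := by
    intro p q n
    constructor
    · rintro ⟨E, hE, E', hE', hpE, hqE', x, hxE, hxE'⟩
      rw [hc n] at hE hE'
      obtain ⟨Eb, hEb, rfl⟩ := hE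
      obtain ⟨Fb, hFb, rfl⟩ := hE'
      exact ⟨Eb, hEb, Fb, hFb, hpE, hqE', ⟨h x, hxE, hxE'⟩⟩
    · rintro ⟨Eb, hEb, Fb, hFb, hpEb, hqFb, y, hyEb, hyFb⟩
      obtain ⟨x, rfl⟩ := hsurj y
      refine ⟨h ⁻¹' Eb, ?_, h ⁻¹' Fb, ?_, hpEb, hqFb, ⟨x, hyEb, hyFb⟩⟩
      · rw [hc n]; exact Set.mem_image_of_mem _ hEb
      · rw [hc n]; exact Set.mem_image_of_mem _ hFb
  set K₁ : ℝ := cX.C * cX.c₂ / cX.c₁ with hK₁def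
  set M₁ : ℝ := cY.c₂ * cY.C / cY.c₁ with hM₁def
  set α : ℝ := Real.log cY.R / Real.log cX.r with hαdef
  set β : ℝ := Real.log cY.r / Real.log cX.R with hβdef
  have hK₁ : 0 < K₁ := div_pos (mul_pos cX.Cpos cX.c₂pos) cX.c₁pos
  have hM₁ : 0 < M₁ := div_pos (mul_pos cY.c₂pos cY.Cpos) cY.c₁pos
  have hα : 0 < α :=
    div_pos_iff.2 (Or.inr ⟨Real.log_neg cY.Rpos cY.Rlt1, Real.log_neg cX.rpos cX.rlt1⟩)
  have hβ : 0 < β :=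
    div_pos_iff.2 (Or.inr ⟨Real.log_neg cY.rpos cY.rlt1, Real.log_neg cX.Rpos cX.Rlt1⟩)
  refine ⟨fun t => M₁ * ((K₁ * t) ^ α + (K₁ * t) ^ β),
    isQSGauge_pow M₁ K₁ α β hM₁ hK₁ hα hβ, ?_⟩
  intro a b c hab hac hbc
  obtain ⟨u, hu, hu1⟩ := cX.exists_level hab
  obtain ⟨v, hv, hv1⟩ := cX.exists_level hac
  obtain ⟨Eu, hEuY, haEuY⟩ := cY.cover u (h a)
  obtain ⟨Ev, hEvY, haEvY⟩ := cY.cover v (h a)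
  have hEuX : h ⁻¹' Eu ∈ cX.cells u := by
    rw [hc u]; exact Set.mem_image_of_mem _ hEuY
  have hEvX : h ⁻¹' Ev ∈ cX.cells v := by
    rw [hc v]; exact Set.mem_image_of_mem _ hEvY
  have haEuX : a ∈ h ⁻¹' Eu := haEuY
  have haEvX : a ∈ h ⁻¹' Ev := haEvY
  -- distances and diameters
  have hdab : 0 < cX.d a b := cX.d_pos hab
  have hdac : 0 < cX.d a c := cX.d_pos hac
  have hdYac : 0 < cY.d (h a) (h c) := cY.d_pos (fun e => hac (hinj e))
  have hDuX : 0 < sdiam cX.d (h ⁻¹' Eu) := cX.diam_pos hEuX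
  have hDvX : 0 < sdiam cX.d (h ⁻¹' Ev) := cX.diam_pos hEvX
  have hDuY : 0 < sdiam cY.d Eu := cY.diam_pos hEuY
  have hDvY : 0 < sdiam cY.d Ev := cY.diam_pos hEvY
  -- four key estimates
  have e1 : cX.c₁ * sdiam cX.d (h ⁻¹' Eu) ≤ cX.d a b := cX.lemB hu1 hEuX haEuX
  have e2 : cX.d a c ≤ cX.c₂ * sdiam cX.d (h ⁻¹' Ev) := cX.lemA hv hEvX haEvX
  have e3 : cY.d (h a) (h b) ≤ cY.c₂ * sdiam cY.d Eu :=
    cY.lemA ((hmeets a b u).1 hu) hEuY haEuY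
  have e4 : cY.c₁ * sdiam cY.d Ev ≤ cY.d (h a) (h c) :=
    cY.lemB (fun hm => hv1 ((hmeets a c (v + 1)).2 hm)) hEvY haEvY
  set z : ℝ := K₁ * (cX.d a b / cX.d a c) with hzdef
  have hz : 0 < z := mul_pos hK₁ (div_pos hdab hdac)
  have hzα : (0:ℝ) ≤ z ^ α := Real.rpow_nonneg hz.le _
  have hzβ : (0:ℝ) ≤ z ^ β := Real.rpow_nonneg hz.le _
  have hKdab : K₁ * cX.d a b = cX.C * cX.c₂ / cX.c₁ * cX.d a b := by rw [hK₁def]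
  have hMc : M₁ * cY.c₁ = cY.c₂ * cY.C := by
    rw [hM₁def, div_mul_eq_mul_div, mul_div_assoc, div_self (ne_of_gt cY.c₁pos), mul_one]
  have hKc : K₁ * cX.c₁ = cX.C * cX.c₂ := by
    rw [hK₁def, div_mul_eq_mul_div, mul_div_assoc, div_self (ne_of_gt cX.c₁pos), mul_one]
  show cY.d (h a) (h b) / cY.d (h a) (h c) ≤ M₁ * (z ^ α + z ^ β)
  rw [div_le_iff₀ hdYac]
  rcases le_or_gt v u with huv | huv
  · -- case u ≥ v, k = u - v
    set k : ℕ := u - v with hk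
    have hXdec : cX.r ^ k * sdiam cX.d (h ⁻¹' Ev) ≤ cX.C * sdiam cX.d (h ⁻¹' Eu) :=
      (cX.decay_mul huv hEvX hEuX ⟨a, haEvX, haEuX⟩).1
    have hYdec : sdiam cY.d Eu ≤ cY.C * cY.R ^ k * sdiam cY.d Ev :=
      (cY.decay_mul huv hEvY hEuY ⟨h a, haEvY, haEuY⟩).2
    have hrk : (0:ℝ) < cX.r ^ k := pow_pos cX.rpos k
    have hstepA : cX.r ^ k ≤ z := by
      rw [hzdef, mul_div_assoc', le_div_iff₀ hdac]
      have t1 : cX.r ^ k * cX.d a c ≤ cX.r ^ k * (cX.c₂ * sdiam cX.d (h ⁻¹' Ev)) :=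
        mul_le_mul_of_nonneg_left e2 hrk.le
      have t2 : cX.r ^ k * (cX.c₂ * sdiam cX.d (h ⁻¹' Ev))
          ≤ cX.c₂ * (cX.C * sdiam cX.d (h ⁻¹' Eu)) := by
        have h0 := mul_le_mul_of_nonneg_left hXdec cX.c₂pos.le
        calc cX.r ^ k * (cX.c₂ * sdiam cX.d (h ⁻¹' Ev))
            = cX.c₂ * (cX.r ^ k * sdiam cX.d (h ⁻¹' Ev)) := by ring
          _ ≤ cX.c₂ * (cX.C * sdiam cX.d (h ⁻¹' Eu)) := h0
      have t3 : cX.C * cX.c₂ * sdiam cX.d (h ⁻¹' Eu) ≤ K₁ * cX.d a b := by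
        have := mul_le_mul_of_nonneg_left e1 hK₁.le
        calc cX.C * cX.c₂ * sdiam cX.d (h ⁻¹' Eu)
            = K₁ * (cX.c₁ * sdiam cX.d (h ⁻¹' Eu)) := by rw [← mul_assoc, hKc]
          _ ≤ K₁ * cX.d a b := this
      linarith
    have hstepB : cY.R ^ k ≤ z ^ α := by
      rw [hαdef]
      exact pow_log_trans k cX.rpos cY.Rpos (hαdef ▸ hα) hz hstepA
    calc cY.d (h a) (h b) ≤ cY.c₂ * sdiam cY.d Eu := e3
      _ ≤ cY.c₂ * (cY.C * cY.R ^ k * sdiam cY.d Ev) :=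
          mul_le_mul_of_nonneg_left hYdec cY.c₂pos.le
      _ ≤ cY.c₂ * (cY.C * z ^ α * sdiam cY.d Ev) := by
          refine mul_le_mul_of_nonneg_left ?_ cY.c₂pos.le
          exact mul_le_mul_of_nonneg_right
            (mul_le_mul_of_nonneg_left hstepB cY.Cpos.le) hDvY.le
      _ = M₁ * z ^ α * (cY.c₁ * sdiam cY.d Ev) := by
          rw [show M₁ * z ^ α * (cY.c₁ * sdiam cY.d Ev)
              = M₁ * cY.c₁ * (z ^ α * sdiam cY.d Ev) by ring, hMc]; ring
      _ ≤ M₁ * z ^ α * cY.d (h a) (h c) :=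
          mul_le_mul_of_nonneg_left e4 (mul_nonneg hM₁.le hzα)
      _ ≤ M₁ * (z ^ α + z ^ β) * cY.d (h a) (h c) := by
          refine mul_le_mul_of_nonneg_right ?_ hdYac.le
          have : M₁ * z ^ α ≤ M₁ * (z ^ α + z ^ β) := by nlinarith
          exact this
  · -- case u < v, k = v - u
    set k : ℕ := v - u with hk
    have hXdec : sdiam cX.d (h ⁻¹' Ev) ≤ cX.C * cX.R ^ k * sdiam cX.d (h ⁻¹' Eu) :=
      (cX.decay_mul huv.le hEuX hEvX ⟨a, haEuX, haEvX⟩).2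
    have hYdec : cY.r ^ k * sdiam cY.d Eu ≤ cY.C * sdiam cY.d Ev :=
      (cY.decay_mul huv.le hEuY hEvY ⟨h a, haEuY, haEvY⟩).1
    have hRk : (0:ℝ) < cX.R ^ k := pow_pos cX.Rpos k
    have hrk : (0:ℝ) < cY.r ^ k := pow_pos cY.rpos k
    have hstepA : (1 / cX.R) ^ k ≤ z := by
      rw [hzdef, mul_div_assoc', le_div_iff₀ hdac]
      have hinvRk : (1 / cX.R) ^ k * cX.R ^ k = 1 := by
        rw [← mul_pow]; simp [ne_of_gt cX.Rpos]
      have t1 : (1 / cX.R) ^ k * cX.d a c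
          ≤ (1 / cX.R) ^ k * (cX.c₂ * (cX.C * cX.R ^ k * sdiam cX.d (h ⁻¹' Eu))) := by
        have hp : (0:ℝ) < (1 / cX.R) ^ k := pow_pos (div_pos one_pos cX.Rpos) k
        refine mul_le_mul_of_nonneg_left ?_ hp.le
        exact le_trans e2 (mul_le_mul_of_nonneg_left hXdec cX.c₂pos.le)
      have t2 : (1 / cX.R) ^ k * (cX.c₂ * (cX.C * cX.R ^ k * sdiam cX.d (h ⁻¹' Eu)))
          = cX.C * cX.c₂ * sdiam cX.d (h ⁻¹' Eu) := by
        calc (1 / cX.R) ^ k * (cX.c₂ * (cX.C * cX.R ^ k * sdiam cX.d (h ⁻¹' Eu)))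
            = ((1 / cX.R) ^ k * cX.R ^ k) * (cX.c₂ * cX.C * sdiam cX.d (h ⁻¹' Eu)) := by
              ring
          _ = cX.C * cX.c₂ * sdiam cX.d (h ⁻¹' Eu) := by rw [hinvRk]; ring
      have t3 : cX.C * cX.c₂ * sdiam cX.d (h ⁻¹' Eu) ≤ K₁ * cX.d a b := by
        have := mul_le_mul_of_nonneg_left e1 hK₁.le
        calc cX.C * cX.c₂ * sdiam cX.d (h ⁻¹' Eu)
            = K₁ * (cX.c₁ * sdiam cX.d (h ⁻¹' Eu)) := by rw [← mul_assoc, hKc]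
          _ ≤ K₁ * cX.d a b := this
      linarith [t1, t2.le, t3]
    have hstepB : (1 / cY.r) ^ k ≤ z ^ β := by
      have hrw : Real.log (1 / cY.r) / Real.log (1 / cX.R) = β := by
        rw [hβdef, one_div, one_div, Real.log_inv, Real.log_inv, neg_div_neg_eq]
      have := pow_log_trans k (p := 1 / cX.R) (ρ := 1 / cY.r)
        (div_pos one_pos cX.Rpos) (div_pos one_pos cY.rpos) (hrw ▸ hβ) hz hstepA
      rwa [hrw] at this
    have hYdec' : sdiam cY.d Eu ≤ cY.C * (1 / cY.r) ^ k * sdiam cY.d Ev := by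
      have hinvrk : (1 / cY.r) ^ k * cY.r ^ k = 1 := by
        rw [← mul_pow]; simp [ne_of_gt cY.rpos]
      have hp : (0:ℝ) < (1 / cY.r) ^ k := pow_pos (div_pos one_pos cY.rpos) k
      have := mul_le_mul_of_nonneg_left hYdec hp.le
      calc sdiam cY.d Eu = ((1 / cY.r) ^ k * cY.r ^ k) * sdiam cY.d Eu := by
            rw [hinvrk]; ring
        _ = (1 / cY.r) ^ k * (cY.r ^ k * sdiam cY.d Eu) := by ring
        _ ≤ (1 / cY.r) ^ k * (cY.C * sdiam cY.d Ev) := this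
        _ = cY.C * (1 / cY.r) ^ k * sdiam cY.d Ev := by ring
    calc cY.d (h a) (h b) ≤ cY.c₂ * sdiam cY.d Eu := e3
      _ ≤ cY.c₂ * (cY.C * (1 / cY.r) ^ k * sdiam cY.d Ev) :=
          mul_le_mul_of_nonneg_left hYdec' cY.c₂pos.le
      _ ≤ cY.c₂ * (cY.C * z ^ β * sdiam cY.d Ev) := by
          refine mul_le_mul_of_nonneg_left ?_ cY.c₂pos.le
          exact mul_le_mul_of_nonneg_right
            (mul_le_mul_of_nonneg_left hstepB cY.Cpos.le) hDvY.le
      _ = M₁ * z ^ β * (cY.c₁ * sdiam cY.d Ev) := by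
          rw [show M₁ * z ^ β * (cY.c₁ * sdiam cY.d Ev)
              = M₁ * cY.c₁ * (z ^ β * sdiam cY.d Ev) by ring, hMc]; ring
      _ ≤ M₁ * z ^ β * cY.d (h a) (h c) :=
          mul_le_mul_of_nonneg_left e4 (mul_nonneg hM₁.le hzβ)
      _ ≤ M₁ * (z ^ α + z ^ β) * cY.d (h a) (h c) := by
          refine mul_le_mul_of_nonneg_right ?_ hdYac.le
          have : M₁ * z ^ β ≤ M₁ * (z ^ α + z ^ β) := by nlinarith
          exact this

/-- The forward direction: a quasisymmetry pulls back undistortedness. -/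
lemma und_of_qs {X Y : Type*} [MetricSpace X] (cY : UndCtx Y)
    (cellsX : ℕ → Set (Set X)) (f : X → Y) (hinjf : Function.Injective f)
    (hmaps : ∀ n, ∀ E ∈ cellsX n, f '' E ∈ cY.cells n)
    (hcover : ∀ n (x : X), ∃ E ∈ cellsX n, x ∈ E)
    (hcomp : ∀ n, ∀ E ∈ cellsX n, IsCompact E)
    (hpos : ∀ n, ∀ E ∈ cellsX n, 0 < sdiam (fun a b : X => dist a b) E)
    (BX : ℝ) (hBX : ∀ x y : X, dist x y ≤ BX)
    (η : ℝ → ℝ) (hη : IsQSGauge η) (hqs : QSIneq (fun a b : X => dist a b) cY.d f η) :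
    IsUndistorted cellsX (fun a b : X => dist a b) := by
  classical
  set dd : X → X → ℝ := fun a b => dist a b with hdd
  have hdd0 : ∀ x y, 0 ≤ dd x y := fun x y => dist_nonneg
  -- gauge facts
  have hηmono : ∀ s t : ℝ, 0 ≤ s → s ≤ t → η s ≤ η t := by
    intro s t hs hst
    rcases eq_or_lt_of_le hst with rfl | hlt
    · exact le_refl _
    · exact (hη.2.1 (Set.mem_Ici.2 hs) (Set.mem_Ici.2 (le_trans hs hst)) hlt).le
  have hηnn : ∀ t : ℝ, 0 ≤ t → 0 ≤ η t := fun t ht => hη.2.2.2.1 (Set.mem_Ici.2 ht)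
  have hη1 : 0 < η 1 := by
    have := hη.2.1 (Set.mem_Ici.2 (le_refl (0:ℝ))) (Set.mem_Ici.2 zero_le_one) one_pos
    rwa [hη.2.2.1] at this
  have hη4 : 0 < η 4 := by
    have := hη.2.1 (Set.mem_Ici.2 (le_refl (0:ℝ)))
      (Set.mem_Ici.2 (by norm_num : (0:ℝ) ≤ 4)) (by norm_num)
    rwa [hη.2.2.1] at this
  -- inverse gauge
  have hsurj : ∀ s : ℝ, 0 ≤ s → ∃ t, 0 ≤ t ∧ η t = s := by
    intro s hs
    obtain ⟨t, ht, hts⟩ := hη.2.2.2.2 (Set.mem_Ici.2 hs)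
    exact ⟨t, ht, hts⟩
  choose ψ hψ0 hψη using hsurj
  have hψle : ∀ s u : ℝ, (hs : 0 ≤ s) → 0 ≤ u → s ≤ η u → ψ s hs ≤ u := by
    intro s u hs hu hle
    by_contra hlt
    push_neg at hlt
    have := hη.2.1 (Set.mem_Ici.2 hu) (Set.mem_Ici.2 (hψ0 s hs)) hlt
    rw [hψη] at this
    linarith
  have hψpos : ∀ s : ℝ, (hs : 0 ≤ s) → 0 < s → 0 < ψ s hs := by
    intro s hs hspos
    rcases lt_or_eq_of_le (hψ0 s hs) with h | h
    · exact h
    · exfalso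
      have := hψη s hs
      rw [← h, hη.2.2.1] at this
      linarith
  set Λ : ℝ := 1 + 1 / η 1 with hΛ
  have hΛ1 : 1 ≤ Λ := by
    have : 0 < 1 / η 1 := div_pos one_pos hη1
    rw [hΛ]; linarith
  have hΛ0 : 0 < Λ := lt_of_lt_of_le one_pos hΛ1
  -- far point in a compact set
  have hfar : ∀ (A : Set X), IsCompact A → ∀ x ∈ A, 0 < sdiam dd A →
      ∃ a ∈ A, sdiam dd A / 2 ≤ dist x a := by
    intro A hA x hx hD
    obtain ⟨⟨p, p'⟩, hmem, hmax⟩ := (hA.prod hA).exists_isMaxOn ⟨(x, x), ⟨hx, hx⟩⟩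
      ((continuous_dist).continuousOn : ContinuousOn (fun pr : X × X => dist pr.1 pr.2) _)
    have hp : p ∈ A := hmem.1
    have hp' : p' ∈ A := hmem.2
    have hDle : sdiam dd A ≤ dist p p' :=
      sdiam_le dd dist_nonneg (fun a ha b hb => hmax (Set.mk_mem_prod ha hb))
    have htri : dist p p' ≤ dist p x + dist x p' := dist_triangle p x p'
    rcases le_or_gt (sdiam dd A / 2) (dist x p) with hc | hc
    · exact ⟨p, hp, hc⟩
    · refine ⟨p', hp', ?_⟩
      have : dist p x = dist x p := dist_comm p x
      linarith
  -- the key quasisymmetry estimate for single distances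
  have key : ∀ (A B : Set X) (x : X), IsCompact A → 0 < sdiam dd A → x ∈ A → x ∈ B →
      ∀ b ∈ B, cY.d (f x) (f b) ≤ Λ * η (2 * sdiam dd B / sdiam dd A) * sdiam cY.d (f '' A) := by
    intro A B x hAc hDA hxA hxB b hbB
    have hDB0 : 0 ≤ sdiam dd B := sdiam_nonneg dd hdd0 B
    have harg0 : 0 ≤ 2 * sdiam dd B / sdiam dd A := div_nonneg (by linarith) hDA.le
    have hηarg0 : 0 ≤ η (2 * sdiam dd B / sdiam dd A) := hηnn _ harg0
    have hDYA0 : 0 ≤ sdiam cY.d (f '' A) := sdiam_nonneg cY.d cY.met.1 _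
    obtain ⟨a, haA, hfa⟩ := hfar A hAc x hxA hDA
    have hxa : x ≠ a := by
      intro e
      rw [← e, dist_self] at hfa
      linarith
    by_cases hbx : b = x
    · rw [hbx, (cY.met.2.1 _ _).2 rfl]
      exact mul_nonneg (mul_nonneg hΛ0.le hηarg0) hDYA0
    by_cases hba : b = a
    · have h1 : cY.d (f x) (f b) ≤ sdiam cY.d (f '' A) :=
        le_sdiam cY.d cY.bdd ⟨x, hxA, rfl⟩ ⟨a, haA, by rw [hba]⟩
      have hxb : dist x b ≤ sdiam dd B := le_sdiam dd hBX hxB hbB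
      have harg1 : 1 ≤ 2 * sdiam dd B / sdiam dd A := by
        rw [le_div_iff₀ hDA]
        have : dist x b = dist x a := by rw [hba]
        linarith
      have hηc : η 1 ≤ η (2 * sdiam dd B / sdiam dd A) := hηmono 1 _ zero_le_one harg1
      have hΛη : 1 ≤ Λ * η (2 * sdiam dd B / sdiam dd A) := by
        have e1 : (1 / η 1) * η 1 = 1 := by field_simp
        have e2 : (1 / η 1) * η 1 ≤ Λ * η (2 * sdiam dd B / sdiam dd A) := by
          apply mul_le_mul (by rw [hΛ]; linarith [div_pos one_pos hη1]) hηc hη1.le hΛ0.le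
        linarith
      nlinarith
    · -- generic triple (x, b, a)
      have hQ := hqs x b a (fun e => hbx e.symm) hxa (fun e => hba e)
      have hdxa : 0 < dist x a := lt_of_lt_of_le (by linarith) hfa
      have hdYxa : 0 < cY.d (f x) (f a) := cY.d_pos (fun e => hxa (hinjf e))
      have hdYxa' : cY.d (f x) (f a) ≤ sdiam cY.d (f '' A) :=
        le_sdiam cY.d cY.bdd ⟨x, hxA, rfl⟩ ⟨a, haA, rfl⟩
      have hxb : dist x b ≤ sdiam dd B := le_sdiam dd hBX hxB hbB
      have hratio : dist x b / dist x a ≤ 2 * sdiam dd B / sdiam dd A := by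
        have e1 : dist x b / dist x a ≤ sdiam dd B / (sdiam dd A / 2) :=
          div_le_div₀ hDB0 hxb (half_pos hDA) hfa
        have e2 : sdiam dd B / (sdiam dd A / 2) = 2 * sdiam dd B / sdiam dd A := by
          field_simp
        linarith
      have hηr : η (dist x b / dist x a) ≤ η (2 * sdiam dd B / sdiam dd A) :=
        hηmono _ _ (div_nonneg dist_nonneg dist_nonneg) hratio
      rw [div_le_iff₀ hdYxa] at hQ
      calc cY.d (f x) (f b) ≤ η (dd x b / dd x a) * cY.d (f x) (f a) := hQ
        _ ≤ η (2 * sdiam dd B / sdiam dd A) * sdiam cY.d (f '' A) := by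
            apply mul_le_mul hηr hdYxa' hdYxa.le hηarg0
        _ ≤ Λ * η (2 * sdiam dd B / sdiam dd A) * sdiam cY.d (f '' A) := by
            rw [mul_assoc]
            exact le_mul_of_one_le_left (mul_nonneg hηarg0 hDYA0) hΛ1
  -- diameter version
  have cor : ∀ (A B : Set X) (x : X), IsCompact A → 0 < sdiam dd A → x ∈ A → x ∈ B →
      sdiam cY.d (f '' B) ≤ 2 * Λ * η (2 * sdiam dd B / sdiam dd A) * sdiam cY.d (f '' A) := by
    intro A B x hAc hDA hxA hxB
    have hDB0 : 0 ≤ sdiam dd B := sdiam_nonneg dd hdd0 B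
    have harg0 : 0 ≤ 2 * sdiam dd B / sdiam dd A := div_nonneg (by linarith) hDA.le
    have hηarg0 : 0 ≤ η (2 * sdiam dd B / sdiam dd A) := hηnn _ harg0
    have hDYA0 : 0 ≤ sdiam cY.d (f '' A) := sdiam_nonneg cY.d cY.met.1 _
    apply sdiam_le cY.d (by positivity)
    rintro y1 ⟨b1, hb1, rfl⟩ y2 ⟨b2, hb2, rfl⟩
    have h1 := key A B x hAc hDA hxA hxB b1 hb1
    have h2 := key A B x hAc hDA hxA hxB b2 hb2
    have htri : cY.d (f b1) (f b2) ≤ cY.d (f b1) (f x) + cY.d (f x) (f b2) :=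
      cY.met.2.2.2 _ _ _
    have hsym : cY.d (f b1) (f x) = cY.d (f x) (f b1) := cY.met.2.2.1 _ _
    nlinarith
  -- the workhorse: combinatorial lower diameter bounds via the inverse gauge
  have keyψ : ∀ (s₀ : ℝ) (hs₀ : 0 ≤ s₀) (m n : ℕ) (A B : Set X) (x : X),
      A ∈ cellsX m → B ∈ cellsX n → x ∈ A → x ∈ B →
      s₀ * (2 * Λ * sdiam cY.d (f '' A)) ≤ sdiam cY.d (f '' B) →
      ψ s₀ hs₀ * sdiam dd A ≤ 2 * sdiam dd B := by
    intro s₀ hs₀ m n A B x hA hB hxA hxB hs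
    have hDA := hpos m A hA
    have hDYA := cY.diam_pos (hmaps m A hA)
    have hDB0 : 0 ≤ sdiam dd B := sdiam_nonneg dd hdd0 B
    have hcorr := cor A B x (hcomp m A hA) hDA hxA hxB
    have harg0 : 0 ≤ 2 * sdiam dd B / sdiam dd A := div_nonneg (by linarith) hDA.le
    have hs₀η : s₀ ≤ η (2 * sdiam dd B / sdiam dd A) := by
      by_contra hlt
      push_neg at hlt
      have h2 := le_trans hs hcorr
      rw [show 2 * Λ * η (2 * sdiam dd B / sdiam dd A) * sdiam cY.d (f '' A)
          = η (2 * sdiam dd B / sdiam dd A) * (2 * Λ * sdiam cY.d (f '' A)) by ring] at h2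
      have h3 := le_of_mul_le_mul_right h2 (mul_pos (mul_pos two_pos hΛ0) hDYA)
      linarith
    have := hψle s₀ _ hs₀ harg0 hs₀η
    rw [le_div_iff₀ hDA] at this
    linarith
  -- constants
  have hη40 : 0 ≤ η 4 := hη4.le
  have hψ4 : ψ (η 4) hη40 = 4 := by
    have h := hψη (η 4) hη40
    exact hη.2.1.injOn (Set.mem_Ici.2 (hψ0 _ _)) (by norm_num : (4:ℝ) ∈ Set.Ici 0) h
  have h2ΛC : (0:ℝ) < 2 * Λ * cY.C := mul_pos (mul_pos two_pos hΛ0) cY.Cpos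
  set s₁ : ℝ := 1 / (2 * Λ * cY.C) with hs₁def
  have hs₁pos : 0 < s₁ := div_pos one_pos h2ΛC
  have hs₁0 : 0 ≤ s₁ := hs₁pos.le
  set s₂ : ℝ := cY.r / (2 * Λ * cY.C) with hs₂def
  have hs₂pos : 0 < s₂ := div_pos cY.rpos h2ΛC
  have hs₂0 : 0 ≤ s₂ := hs₂pos.le
  set ε₁ : ℝ := ψ s₁ hs₁0 with hε₁def
  set ε₀ : ℝ := ψ s₂ hs₂0 with hε₀def
  have hε₁ : 0 < ε₁ := hψpos _ _ hs₁pos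
  have hε₀ : 0 < ε₀ := hψpos _ _ hs₂pos
  obtain ⟨k₁, hk₁⟩ := exists_pow_lt_of_lt_one
    (show (0:ℝ) < 1 / (2 * Λ * cY.C * η 4) from div_pos one_pos (mul_pos h2ΛC hη4)) cY.Rlt1
  set k₀ : ℕ := k₁ + 1 with hk₀def
  have hk₀pos : 0 < k₀ := Nat.succ_pos _
  have hk₀ : cY.R ^ k₀ < 1 / (2 * Λ * cY.C * η 4) :=
    lt_of_le_of_lt (pow_le_pow_of_le_one cY.Rpos.le cY.Rlt1.le (Nat.le_succ _)) hk₁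
  -- chains of cells through a point
  choose F hFmem hFx using hcover
  have hint : ∀ (A B : Set X) (x : X), x ∈ A → x ∈ B → ((f '' A) ∩ (f '' B)).Nonempty :=
    fun A B x hxA hxB => ⟨f x, ⟨x, hxA, rfl⟩, ⟨x, hxB, rfl⟩⟩
  -- one-step down
  have down : ∀ (x : X) (j : ℕ), ε₀ * sdiam dd (F j x) ≤ 2 * sdiam dd (F (j + 1) x) := by
    intro x j
    apply keyψ s₂ hs₂0 j (j + 1) _ _ x (hFmem j x) (hFmem (j + 1) x) (hFx j x) (hFx (j + 1) x)
    have hdec := (cY.decay_mul (Nat.le_succ j) (hmaps j _ (hFmem j x))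
      (hmaps (j + 1) _ (hFmem (j + 1) x)) (hint _ _ x (hFx j x) (hFx (j + 1) x))).1
    rw [Nat.succ_sub (le_refl j), Nat.sub_self, pow_one] at hdec
    rw [hs₂def, div_mul_eq_mul_div, div_le_iff₀ h2ΛC]
    linarith only [mul_le_mul_of_nonneg_left hdec (mul_pos two_pos hΛ0).le]
  -- one-step up
  have up : ∀ (x : X) (j : ℕ), ε₁ * sdiam dd (F (j + 1) x) ≤ 2 * sdiam dd (F j x) := by
    intro x j
    apply keyψ s₁ hs₁0 (j + 1) j _ _ x (hFmem (j + 1) x) (hFmem j x) (hFx (j + 1) x) (hFx j x)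
    have hdec := (cY.decay_mul (Nat.le_succ j) (hmaps j _ (hFmem j x))
      (hmaps (j + 1) _ (hFmem (j + 1) x)) (hint _ _ x (hFx j x) (hFx (j + 1) x))).2
    rw [Nat.succ_sub (le_refl j), Nat.sub_self, pow_one] at hdec
    have hDYB0 : 0 ≤ sdiam cY.d (f '' F j x) := sdiam_nonneg cY.d cY.met.1 _
    have hdec' : sdiam cY.d (f '' F (j + 1) x) ≤ cY.C * sdiam cY.d (f '' F j x) := by
      linarith only [hdec,
        mul_nonneg (mul_nonneg (sub_nonneg.2 cY.Rlt1.le) cY.Cpos.le) hDYB0]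
    rw [hs₁def, div_mul_eq_mul_div, div_le_iff₀ h2ΛC]
    linarith only [mul_le_mul_of_nonneg_left hdec' (mul_pos two_pos hΛ0).le]
  -- same-level comparison
  have same : ∀ (n : ℕ) (A B : Set X) (x : X), A ∈ cellsX n → B ∈ cellsX n → x ∈ A → x ∈ B →
      ε₁ * sdiam dd A ≤ 2 * sdiam dd B := by
    intro n A B x hA hB hxA hxB
    apply keyψ s₁ hs₁0 n n A B x hA hB hxA hxB
    have hdec := (cY.decay_mul (le_refl n) (hmaps n B hB) (hmaps n A hA) (hint B A x hxB hxA)).2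
    rw [Nat.sub_self, pow_zero, mul_one] at hdec
    rw [hs₁def, div_mul_eq_mul_div, div_le_iff₀ h2ΛC]
    linarith only [mul_le_mul_of_nonneg_left hdec (mul_pos two_pos hΛ0).le]
  -- k₀-step halving
  have half : ∀ (x : X) (j : ℕ),
      4 * sdiam dd (F (j + k₀) x) ≤ 2 * sdiam dd (F j x) := by
    intro x j
    have h := keyψ (η 4) hη40 (j + k₀) j _ _ x (hFmem (j + k₀) x) (hFmem j x)
      (hFx (j + k₀) x) (hFx j x) ?_
    · rwa [hψ4] at h
    · have hdec := (cY.decay_mul (Nat.le_add_right j k₀) (hmaps j _ (hFmem j x))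
        (hmaps (j + k₀) _ (hFmem (j + k₀) x)) (hint _ _ x (hFx j x) (hFx (j + k₀) x))).2
      rw [Nat.add_sub_cancel_left] at hdec
      have hDYB0 : 0 ≤ sdiam cY.d (f '' F j x) := sdiam_nonneg cY.d cY.met.1 _
      have hRk : (0:ℝ) < cY.R ^ k₀ := pow_pos cY.Rpos k₀
      have h1 : 2 * Λ * cY.C * η 4 * cY.R ^ k₀ ≤ 1 := by
        rw [lt_div_iff₀ (mul_pos h2ΛC hη4)] at hk₀
        linarith only [hk₀]
      have h2 : η 4 * (2 * Λ * sdiam cY.d (f '' F (j + k₀) x))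
          ≤ η 4 * (2 * Λ * (cY.C * cY.R ^ k₀ * sdiam cY.d (f '' F j x))) :=
        mul_le_mul_of_nonneg_left
          (mul_le_mul_of_nonneg_left hdec (mul_pos two_pos hΛ0).le) hη4.le
      have h3 : η 4 * (2 * Λ * (cY.C * cY.R ^ k₀ * sdiam cY.d (f '' F j x)))
          = (2 * Λ * cY.C * η 4 * cY.R ^ k₀) * sdiam cY.d (f '' F j x) := by ring
      linarith only [h2, h3, mul_le_mul_of_nonneg_right h1 hDYB0]
  -- chained bounds
  have chainlow : ∀ (x : X) (j i : ℕ),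
      (ε₀ / 2) ^ i * sdiam dd (F j x) ≤ sdiam dd (F (j + i) x) := by
    intro x j i
    induction i with
    | zero => simp
    | succ i ih =>
      calc (ε₀ / 2) ^ (i + 1) * sdiam dd (F j x)
          = (ε₀ / 2) * ((ε₀ / 2) ^ i * sdiam dd (F j x)) := by ring
        _ ≤ (ε₀ / 2) * sdiam dd (F (j + i) x) :=
            mul_le_mul_of_nonneg_left ih (div_pos hε₀ two_pos).le
        _ ≤ sdiam dd (F (j + i + 1) x) := by linarith [down x (j + i)]
        _ = sdiam dd (F (j + (i + 1)) x) := by rw [show j + i + 1 = j + (i + 1) from rfl]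
  have chainup1 : ∀ (x : X) (j i : ℕ),
      sdiam dd (F (j + i) x) ≤ (2 / ε₁) ^ i * sdiam dd (F j x) := by
    intro x j i
    induction i with
    | zero => simp
    | succ i ih =>
      have hstep : sdiam dd (F (j + i + 1) x) ≤ 2 / ε₁ * sdiam dd (F (j + i) x) := by
        rw [div_mul_eq_mul_div, le_div_iff₀ hε₁]
        linarith only [up x (j + i)]
      calc sdiam dd (F (j + (i + 1)) x) = sdiam dd (F (j + i + 1) x) := rfl
        _ ≤ 2 / ε₁ * sdiam dd (F (j + i) x) := hstep
        _ ≤ 2 / ε₁ * ((2 / ε₁) ^ i * sdiam dd (F j x)) :=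
            mul_le_mul_of_nonneg_left ih (div_pos two_pos hε₁).le
        _ = (2 / ε₁) ^ (i + 1) * sdiam dd (F j x) := by ring
  have chainup2 : ∀ (x : X) (j i : ℕ),
      sdiam dd (F (j + k₀ * i) x) ≤ (1 / 2) ^ i * sdiam dd (F j x) := by
    intro x j i
    induction i with
    | zero => simp
    | succ i ih =>
      have hstep : sdiam dd (F (j + k₀ * i + k₀) x)
          ≤ (1 / 2) * sdiam dd (F (j + k₀ * i) x) := by
        linarith [half x (j + k₀ * i)]
      calc sdiam dd (F (j + k₀ * (i + 1)) x)
          = sdiam dd (F (j + k₀ * i + k₀) x) := by rw [show j + k₀ * (i + 1) = j + k₀ * i + k₀ by ring]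
        _ ≤ (1 / 2) * sdiam dd (F (j + k₀ * i) x) := hstep
        _ ≤ (1 / 2) * ((1 / 2) ^ i * sdiam dd (F j x)) :=
            mul_le_mul_of_nonneg_left ih (by norm_num)
        _ = (1 / 2) ^ (i + 1) * sdiam dd (F j x) := by ring
  -- final constants
  set R' : ℝ := (2:ℝ) ^ (-(k₀:ℝ)⁻¹) with hR'def
  have hk₀R : (0:ℝ) < (k₀:ℝ) := Nat.cast_pos.2 hk₀pos
  have hR'pos : 0 < R' := Real.rpow_pos_of_pos two_pos _
  have hR'lt1 : R' < 1 := by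
    apply Real.rpow_lt_one_of_one_lt_of_neg one_lt_two
    simp only [neg_neg, Left.neg_neg_iff]
    exact inv_pos.2 hk₀R
  set r' : ℝ := min (ε₀ / 2) R' with hr'def
  have hr'pos : 0 < r' := lt_min (div_pos hε₀ two_pos) hR'pos
  set κ : ℝ := 2 / ε₁ + 1 with hκdef
  have hκε : 2 / ε₁ ≤ κ := by rw [hκdef]; linarith
  have hκ1 : 1 ≤ κ := by
    rw [hκdef]; linarith [div_pos two_pos hε₁]
  have hκ0 : 0 ≤ κ := by linarith
  set C' : ℝ := 2 * κ ^ (k₀ + 2) with hC'def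
  have hκpow1 : 1 ≤ κ ^ (k₀ + 2) := one_le_pow₀ hκ1
  have hC'1 : 1 ≤ C' := by rw [hC'def]; linarith
  have hC'pos : 0 < C' := lt_of_lt_of_le one_pos hC'1
  have hδψ : 0 < ψ cY.δ cY.δpos.le := hψpos _ _ cY.δpos
  set δ' : ℝ := ψ cY.δ cY.δpos.le / 2 with hδ'def
  have hδ'pos : 0 < δ' := half_pos hδψ
  -- (1/2)^(k/k₀) ≤ 2 * R'^k
  have hR'bound : ∀ k : ℕ, ((1:ℝ) / 2) ^ (k / k₀) ≤ 2 * R' ^ k := by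
    intro k
    have hks : k₀ * (k / k₀) + k % k₀ = k := Nat.div_add_mod k k₀
    have hslt : k % k₀ < k₀ := Nat.mod_lt _ hk₀pos
    have hcast : R' ^ k = (2:ℝ) ^ (-(k₀:ℝ)⁻¹ * k) := by
      rw [hR'def, ← Real.rpow_natCast ((2:ℝ) ^ (-(k₀:ℝ)⁻¹)) k, ← Real.rpow_mul (by norm_num)]
    have hhalf : ((1:ℝ) / 2) ^ (k / k₀) = (2:ℝ) ^ (-((k / k₀ : ℕ):ℝ)) := by
      rw [Real.rpow_neg (by norm_num), Real.rpow_natCast, one_div, inv_pow]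
    rw [hhalf, hcast]
    have h2 : (k:ℝ) ≤ (1 + ((k / k₀ : ℕ):ℝ)) * (k₀:ℝ) := by
      have h3 : k ≤ k₀ + k₀ * (k / k₀) := by omega
      calc (k:ℝ) ≤ ((k₀ + k₀ * (k / k₀) : ℕ) : ℝ) := by exact_mod_cast h3
        _ = (1 + ((k / k₀ : ℕ):ℝ)) * (k₀:ℝ) := by push_cast; ring
    have h4 : (k:ℝ) * (k₀:ℝ)⁻¹ ≤ 1 + ((k / k₀ : ℕ):ℝ) := by
      rw [← div_eq_mul_inv, div_le_iff₀ hk₀R]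
      exact h2
    have hexp : -(((k / k₀ : ℕ):ℝ)) ≤ 1 + (-(k₀:ℝ)⁻¹ * k) := by
      have : -(k₀:ℝ)⁻¹ * k = -((k:ℝ) * (k₀:ℝ)⁻¹) := by ring
      rw [this]; linarith
    calc (2:ℝ) ^ (-(((k / k₀ : ℕ):ℝ))) ≤ (2:ℝ) ^ (1 + (-(k₀:ℝ)⁻¹ * (k:ℝ))) :=
          Real.rpow_le_rpow_of_exponent_le one_le_two hexp
      _ = 2 * (2:ℝ) ^ (-(k₀:ℝ)⁻¹ * (k:ℝ)) := by rw [Real.rpow_add two_pos, Real.rpow_one]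
  -- assemble
  refine ⟨r', R', C', δ', hr'pos, min_le_right _ _, hR'lt1, hC'1, hδ'pos, ?_, ?_⟩
  · -- exponential decay in X
    intro m n hmn E hE E' hE' hEE'
    obtain ⟨x, hxE, hxE'⟩ := hEE'
    have hkn : m + (n - m) = n := Nat.add_sub_cancel' hmn
    have hDE := hpos m E hE
    have hDE' := hpos n E' hE'
    have hDFm0 : 0 ≤ sdiam dd (F m x) := sdiam_nonneg dd hdd0 _
    have hDFn0 : 0 ≤ sdiam dd (F n x) := sdiam_nonneg dd hdd0 _
    constructor
    · -- lower bound
      rw [div_le_div_iff₀ hC'pos hDE]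
      have t1 : ε₁ * sdiam dd E ≤ 2 * sdiam dd (F m x) :=
        same m E (F m x) x hE (hFmem m x) hxE (hFx m x)
      have t2 := chainlow x m (n - m)
      rw [hkn] at t2
      have t3 : ε₁ * sdiam dd (F n x) ≤ 2 * sdiam dd E' :=
        same n (F n x) E' x (hFmem n x) hE' (hFx n x) hxE'
      have u1 : (ε₁ / 2) * sdiam dd E ≤ sdiam dd (F m x) := by linarith
      have u2 : (ε₀ / 2) ^ (n - m) * ((ε₁ / 2) * sdiam dd E) ≤ sdiam dd (F n x) :=
        le_trans (mul_le_mul_of_nonneg_left u1 (pow_nonneg (div_pos hε₀ two_pos).le _)) t2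
      have u3 : (ε₁ / 2) * ((ε₀ / 2) ^ (n - m) * ((ε₁ / 2) * sdiam dd E)) ≤ sdiam dd E' := by
        have := mul_le_mul_of_nonneg_left u2 (div_pos hε₁ two_pos).le
        linarith
      have hr'k : r' ^ (n - m) ≤ (ε₀ / 2) ^ (n - m) :=
        pow_le_pow_left₀ hr'pos.le (min_le_left _ _) _
      have hCbig : (2 / ε₁) ^ 2 ≤ C' := by
        have e1 : (2 / ε₁) ^ 2 ≤ κ ^ 2 := pow_le_pow_left₀ (div_pos two_pos hε₁).le hκε 2
        have e2 : κ ^ 2 ≤ κ ^ (k₀ + 2) := pow_le_pow_right₀ hκ1 (by omega)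
        rw [hC'def]
        calc (2 / ε₁) ^ 2 ≤ κ ^ (k₀ + 2) := le_trans e1 e2
          _ ≤ 2 * κ ^ (k₀ + 2) :=
              le_mul_of_one_le_left (le_trans zero_le_one hκpow1) one_le_two
      have hCinv : 1 ≤ C' * (ε₁ / 2) ^ 2 := by
        have e3 : (2 / ε₁) ^ 2 * (ε₁ / 2) ^ 2 = 1 := by
          rw [← mul_pow]; field_simp
        have e4 : (0:ℝ) < (ε₁ / 2) ^ 2 := pow_pos (div_pos hε₁ two_pos) 2
        linarith only [e3, mul_le_mul_of_nonneg_right hCbig e4.le]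
      calc r' ^ (n - m) * sdiam dd E ≤ (ε₀ / 2) ^ (n - m) * sdiam dd E :=
            mul_le_mul_of_nonneg_right hr'k hDE.le
        _ ≤ (C' * (ε₁ / 2) ^ 2) * ((ε₀ / 2) ^ (n - m) * sdiam dd E) :=
            le_mul_of_one_le_left
              (mul_nonneg (pow_nonneg (div_pos hε₀ two_pos).le _) hDE.le) hCinv
        _ = C' * ((ε₁ / 2) * ((ε₀ / 2) ^ (n - m) * ((ε₁ / 2) * sdiam dd E))) := by ring
        _ ≤ C' * sdiam dd E' := mul_le_mul_of_nonneg_left u3 hC'pos.le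
        _ = sdiam dd E' * C' := by ring
    · -- upper bound
      rw [div_le_iff₀ hDE]
      have hks : k₀ * ((n - m) / k₀) + (n - m) % k₀ = n - m := Nat.div_add_mod _ _
      have hslt : (n - m) % k₀ < k₀ := Nat.mod_lt _ hk₀pos
      have v1 : ε₁ * sdiam dd E' ≤ 2 * sdiam dd (F n x) :=
        same n E' (F n x) x hE' (hFmem n x) hxE' (hFx n x)
      have v5 : ε₁ * sdiam dd (F m x) ≤ 2 * sdiam dd E :=
        same m (F m x) E x (hFmem m x) hE (hFx m x) hxE
      have veq : n = m + k₀ * ((n - m) / k₀) + (n - m) % k₀ := by omega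
      have v3 := chainup1 x (m + k₀ * ((n - m) / k₀)) ((n - m) % k₀)
      have v4 := chainup2 x m ((n - m) / k₀)
      have w0 : sdiam dd (F n x) = sdiam dd (F (m + k₀ * ((n - m) / k₀) + (n - m) % k₀) x) := by
        rw [← veq]
      have w1 : sdiam dd E' ≤ (2 / ε₁) * sdiam dd (F n x) := by
        rw [div_mul_eq_mul_div, le_div_iff₀ hε₁]; linarith only [v1]
      have w2 : sdiam dd (F m x) ≤ (2 / ε₁) * sdiam dd E := by
        rw [div_mul_eq_mul_div, le_div_iff₀ hε₁]; linarith only [v5]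
      have hpow0 : (0:ℝ) ≤ (2 / ε₁) ^ ((n - m) % k₀) := pow_nonneg (div_pos two_pos hε₁).le _
      have hhalfpow0 : (0:ℝ) ≤ ((1:ℝ) / 2) ^ ((n - m) / k₀) := by positivity
      have w3 : sdiam dd (F n x)
          ≤ (2 / ε₁) ^ ((n - m) % k₀) * (((1:ℝ) / 2) ^ ((n - m) / k₀) * sdiam dd (F m x)) := by
        rw [w0]
        exact le_trans v3 (mul_le_mul_of_nonneg_left v4 hpow0)
      have w4 : sdiam dd E'
          ≤ (2 / ε₁) * ((2 / ε₁) ^ ((n - m) % k₀) *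
            (((1:ℝ) / 2) ^ ((n - m) / k₀) * ((2 / ε₁) * sdiam dd E))) := by
        have step1 := le_trans w1 (mul_le_mul_of_nonneg_left w3 (div_pos two_pos hε₁).le)
        have step2 : ((1:ℝ) / 2) ^ ((n - m) / k₀) * sdiam dd (F m x)
            ≤ ((1:ℝ) / 2) ^ ((n - m) / k₀) * ((2 / ε₁) * sdiam dd E) :=
          mul_le_mul_of_nonneg_left w2 hhalfpow0
        have step3 : (2 / ε₁) ^ ((n - m) % k₀) * (((1:ℝ) / 2) ^ ((n - m) / k₀) * sdiam dd (F m x))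
            ≤ (2 / ε₁) ^ ((n - m) % k₀) * (((1:ℝ) / 2) ^ ((n - m) / k₀) * ((2 / ε₁) * sdiam dd E)) :=
          mul_le_mul_of_nonneg_left step2 hpow0
        calc sdiam dd E' ≤ (2 / ε₁) * sdiam dd (F n x) := w1
          _ ≤ (2 / ε₁) * ((2 / ε₁) ^ ((n - m) % k₀) *
              (((1:ℝ) / 2) ^ ((n - m) / k₀) * sdiam dd (F m x))) :=
            mul_le_mul_of_nonneg_left w3 (div_pos two_pos hε₁).le
          _ ≤ _ := mul_le_mul_of_nonneg_left step3 (div_pos two_pos hε₁).le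
      -- package constants
      have hκs : (2 / ε₁) * (2 / ε₁) ^ ((n - m) % k₀) * (2 / ε₁) ≤ κ ^ (k₀ + 2) := by
        have e1 : (2 / ε₁) * (2 / ε₁) ^ ((n - m) % k₀) * (2 / ε₁)
            = (2 / ε₁) ^ ((n - m) % k₀ + 2) := by ring
        rw [e1]
        calc (2 / ε₁) ^ ((n - m) % k₀ + 2) ≤ κ ^ ((n - m) % k₀ + 2) :=
              pow_le_pow_left₀ (div_pos two_pos hε₁).le hκε _
          _ ≤ κ ^ (k₀ + 2) := pow_le_pow_right₀ hκ1 (by omega)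
      have hfin : sdiam dd E' ≤ κ ^ (k₀ + 2) * (((1:ℝ) / 2) ^ ((n - m) / k₀)) * sdiam dd E := by
        have e2 : (2 / ε₁) * ((2 / ε₁) ^ ((n - m) % k₀) *
            (((1:ℝ) / 2) ^ ((n - m) / k₀) * ((2 / ε₁) * sdiam dd E)))
            = ((2 / ε₁) * (2 / ε₁) ^ ((n - m) % k₀) * (2 / ε₁)) *
              (((1:ℝ) / 2) ^ ((n - m) / k₀) * sdiam dd E) := by ring
        have e3 : ((2 / ε₁) * (2 / ε₁) ^ ((n - m) % k₀) * (2 / ε₁)) *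
              (((1:ℝ) / 2) ^ ((n - m) / k₀) * sdiam dd E)
            ≤ κ ^ (k₀ + 2) * (((1:ℝ) / 2) ^ ((n - m) / k₀) * sdiam dd E) :=
          mul_le_mul_of_nonneg_right hκs (mul_nonneg hhalfpow0 hDE.le)
        calc sdiam dd E' ≤ _ := w4
          _ = _ := e2
          _ ≤ _ := e3
          _ = κ ^ (k₀ + 2) * (((1:ℝ) / 2) ^ ((n - m) / k₀)) * sdiam dd E := by ring
      have hRb := hR'bound (n - m)
      calc sdiam dd E' ≤ κ ^ (k₀ + 2) * (((1:ℝ) / 2) ^ ((n - m) / k₀)) * sdiam dd E := hfin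
        _ ≤ κ ^ (k₀ + 2) * (2 * R' ^ (n - m)) * sdiam dd E :=
            mul_le_mul_of_nonneg_right
              (mul_le_mul_of_nonneg_left hRb (le_trans zero_le_one hκpow1)) hDE.le
        _ = C' * R' ^ (n - m) * sdiam dd E := by rw [hC'def]; ring
  · -- cell separation in X
    intro n E₁ hE₁ E₂ hE₂ hdisj
    have hDE₁ := hpos n E₁ hE₁
    have hne1 : E₁.Nonempty := by
      by_contra h0
      rw [Set.not_nonempty_iff_eq_empty] at h0
      rw [h0, sdiam_empty] at hDE₁
      exact lt_irrefl 0 hDE₁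
    have hne2 : E₂.Nonempty := by
      by_contra h0
      rw [Set.not_nonempty_iff_eq_empty] at h0
      have := hpos n E₂ hE₂
      rw [h0, sdiam_empty] at this
      exact lt_irrefl 0 this
    obtain ⟨p0, hp0⟩ := hne1
    obtain ⟨q0, hq0⟩ := hne2
    show δ' * sdiam dd E₁ ≤ sInf (Set.image2 dd E₁ E₂)
    have hne12 : (Set.image2 dd E₁ E₂).Nonempty := ⟨dd p0 q0, ⟨p0, hp0, q0, hq0, rfl⟩⟩
    apply le_csInf hne12
    rintro v ⟨p, hp, q, hq, rfl⟩
    obtain ⟨p', hp', hfarp⟩ := hfar E₁ (hcomp n E₁ hE₁) p hp hDE₁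
    have hpp' : p ≠ p' := by
      intro e
      rw [← e, dist_self] at hfarp
      linarith
    have hpq : p ≠ q := fun e => (Set.disjoint_left.1 hdisj hp) (e ▸ hq)
    have hp'q : p' ≠ q := fun e => (Set.disjoint_left.1 hdisj hp') (e ▸ hq)
    have hQ := hqs p q p' hpq hpp' (fun e => hp'q e.symm)
    have hdisjY : Disjoint (f '' E₁) (f '' E₂) := by
      rw [Set.disjoint_left]
      rintro y ⟨a1, ha1, rfl⟩ ⟨a2, ha2, he⟩
      have : a2 = a1 := hinjf he
      rw [this] at ha2
      exact (Set.disjoint_left.1 hdisj ha1) ha2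
    have hsepY := cY.sep (hmaps n E₁ hE₁) (hmaps n E₂ hE₂) hdisjY
    have hd1 : cY.δ * sdiam cY.d (f '' E₁) ≤ cY.d (f p) (f q) :=
      le_trans hsepY (sdist_le cY.d cY.met.1 ⟨p, hp, rfl⟩ ⟨q, hq, rfl⟩)
    have hd2 : cY.d (f p) (f p') ≤ sdiam cY.d (f '' E₁) :=
      le_sdiam cY.d cY.bdd ⟨p, hp, rfl⟩ ⟨p', hp', rfl⟩
    have hdYpp' : 0 < cY.d (f p) (f p') := cY.d_pos (fun e => hpp' (hinjf e))
    have hδη : cY.δ ≤ η (dd p q / dd p p') := by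
      have hr0 : cY.δ ≤ cY.d (f p) (f q) / cY.d (f p) (f p') := by
        rw [le_div_iff₀ hdYpp']
        linarith only [hd1, mul_le_mul_of_nonneg_left hd2 cY.δpos.le]
      exact le_trans hr0 hQ
    have harg0 : 0 ≤ dd p q / dd p p' := div_nonneg dist_nonneg dist_nonneg
    have hψd := hψle cY.δ _ cY.δpos.le harg0 hδη
    have hdpp' : 0 < dd p p' := dist_pos.2 hpp'
    rw [le_div_iff₀ hdpp'] at hψd
    have hfin : ψ cY.δ cY.δpos.le * (sdiam dd E₁ / 2) ≤ dd p q := by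
      have := mul_le_mul_of_nonneg_left hfarp (hψ0 cY.δ cY.δpos.le)
      calc ψ cY.δ cY.δpos.le * (sdiam dd E₁ / 2)
          ≤ ψ cY.δ cY.δpos.le * dist p p' := this
        _ ≤ dd p q := hψd
    calc δ' * sdiam dd E₁ = ψ cY.δ cY.δpos.le * (sdiam dd E₁ / 2) := by
          rw [hδ'def]; ring
      _ ≤ dd p q := hfin

/-- Let `Y` be a topologically rigid finitely ramified fractal with
undistorted metric `dY`, and `h : X → Y` a homeomorphism from a metric space `X`.
Then there is a quasisymmetry from `X` to `Y` if and only if the metric of `X` is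
undistorted with respect to the cell structure pulled back along `h`. -/
theorem stmt13 {X Y : Type*} [MetricSpace X]
    [TopologicalSpace Y] [CompactSpace Y] [ConnectedSpace Y]
    [TopologicalSpace.MetrizableSpace Y]
    (CSY : CellStructure Y) (dY : Y → Y → ℝ)
    (hmetY : IsMetricOn dY) (htopY : InducesTopology dY)
    (hrigid : ∀ g : Y → Y, IsHomeomorph g → ∀ n : ℕ, ∀ E ∈ CSY.cells n, g '' E ∈ CSY.cells n)
    (hundY : IsUndistorted CSY.cells dY)
    (h : X → Y) (hh : IsHomeomorph h) :
    (∃ f : X → Y, IsHomeomorph f ∧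
        ∃ η : ℝ → ℝ, IsQSGauge η ∧ QSIneq (fun a b : X => dist a b) dY f η) ↔
      IsUndistorted (fun n => (fun E => h ⁻¹' E) '' CSY.cells n)
        (fun a b : X => dist a b) := by
  classical
  obtain ⟨e, he⟩ := isHomeomorph_iff_exists_homeomorph.1 hh
  haveI hXc : CompactSpace X := e.symm.compactSpace
  obtain ⟨BX, hBXw⟩ := Metric.isBounded_iff.1 (isCompact_univ : IsCompact (Set.univ : Set X)).isBounded
  have hBX : ∀ x y : X, dist x y ≤ BX := fun x y => hBXw (Set.mem_univ x) (Set.mem_univ y)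
  obtain ⟨BY, hBY⟩ := bdd_of_compact dY hmetY htopY
  -- cell structure facts in Y
  have rootmemY : Set.univ ∈ CSY.cells 0 := by rw [CSY.root]; exact Set.mem_singleton _
  have cellneY : ∀ n, ∀ E ∈ CSY.cells n, E.Nonempty := by
    intro n E hE
    obtain ⟨y, hy⟩ := CSY.interior_nonempty n E hE
    exact ⟨y, interior_subset hy⟩
  have coverY : ∀ n (y : Y), ∃ E ∈ CSY.cells n, y ∈ E := by
    intro n
    induction n with
    | zero => exact fun y => ⟨Set.univ, rootmemY, trivial⟩
    | succ n ih =>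
      intro y
      obtain ⟨E, hE, hyE⟩ := ih y
      rw [CSY.eq_sUnion_children n E hE] at hyE
      obtain ⟨E', ⟨hE', _⟩, hyE'⟩ := hyE
      exact ⟨E', hE', hyE'⟩
  obtain ⟨rY, RY, CY0, δY, hundYw⟩ := hundY
  set cY : UndCtx Y :=
    { cells := CSY.cells, d := dY, r := rY, R := RY, C := CY0, δ := δY,
      und := hundYw, met := hmetY, B := BY, bdd := hBY,
      cellne := cellneY, cover := coverY, rootmem := rootmemY } with hcYdef
  -- the pulled-back cells
  set cellsX : ℕ → Set (Set X) := fun n => (fun E => h ⁻¹' E) '' CSY.cells n with hcellsX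
  have hpre : ∀ S : Set Y, h ⁻¹' S = ⇑e.symm '' S := by
    intro S
    rw [← he]
    ext x
    constructor
    · intro hx
      exact ⟨e x, hx, e.symm_apply_apply x⟩
    · rintro ⟨y, hy, rfl⟩
      simpa using hy
  have hcoverX : ∀ n (x : X), ∃ E ∈ cellsX n, x ∈ E := by
    intro n x
    obtain ⟨E, hE, hxE⟩ := coverY n (h x)
    exact ⟨h ⁻¹' E, ⟨E, hE, rfl⟩, hxE⟩
  have hcompX : ∀ n, ∀ E ∈ cellsX n, IsCompact E := by
    rintro n E ⟨Eb, hEb, rfl⟩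
    show IsCompact (h ⁻¹' Eb)
    rw [hpre]
    exact (CSY.isCompact_cells n Eb hEb).image e.symm.continuous
  -- Y has two distinct points
  haveI : Nonempty Y := inferInstance
  have hY2 : ∃ p q : Y, p ≠ q := by
    have h0 : (0:ℝ) < sSup (Set.image2 dY Set.univ Set.univ) := cY.diam_pos cY.rootmem
    have hne0 : (Set.image2 dY Set.univ Set.univ).Nonempty :=
      ⟨dY (Classical.arbitrary Y) (Classical.arbitrary Y),
        ⟨_, trivial, _, trivial, rfl⟩⟩
    obtain ⟨v, hv, hlt⟩ := exists_lt_of_lt_csSup hne0 h0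
    obtain ⟨p, -, q, -, rfl⟩ := hv
    refine ⟨p, q, fun hpq => ?_⟩
    rw [hpq, (hmetY.2.1 q q).2 rfl] at hlt
    exact lt_irrefl 0 hlt
  -- every cell of Y contains two distinct points
  have hcell2 : ∀ n (E : Set Y), E ∈ CSY.cells n → ∃ y0 ∈ E, ∃ y1 ∈ E, y0 ≠ y1 := by
    intro n E hE
    obtain ⟨y0, hy0⟩ := CSY.interior_nonempty n E hE
    by_contra hcon
    push_neg at hcon
    have hsub : interior E = {y0} := by
      apply Set.eq_singleton_iff_unique_mem.2
      refine ⟨hy0, fun z hz => ?_⟩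
      exact hcon z (interior_subset hz) y0 (interior_subset hy0)
    have hop : IsOpen ({y0} : Set Y) := hsub ▸ isOpen_interior
    have hcl : IsClosed ({y0} : Set Y) := by
      rw [← isOpen_compl_iff, htopY]
      intro x hx
      have hxy : x ≠ y0 := by simpa using hx
      have hd : 0 < dY x y0 :=
        lt_of_le_of_ne (hmetY.1 x y0) (fun h0 => hxy ((hmetY.2.1 x y0).1 h0.symm))
      refine ⟨dY x y0, hd, fun z hz => ?_⟩
      simp only [Set.mem_compl_iff, Set.mem_singleton_iff]
      intro hzy
      rw [hzy] at hz
      exact lt_irrefl _ hz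
    have huniv : ({y0} : Set Y) = Set.univ := by
      rcases (isClopen_iff).1 ⟨hcl, hop⟩ with h0 | h0
      · exact absurd h0 (by simp)
      · exact h0
    obtain ⟨p, q, hpq⟩ := hY2
    have hp : p ∈ ({y0} : Set Y) := huniv.symm ▸ Set.mem_univ p
    have hq : q ∈ ({y0} : Set Y) := huniv.symm ▸ Set.mem_univ q
    exact hpq (by rw [Set.eq_of_mem_singleton hp, Set.eq_of_mem_singleton hq])
  -- every pulled-back cell has positive diameter
  have hposX : ∀ n, ∀ E ∈ cellsX n, 0 < sdiam (fun a b : X => dist a b) E := by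
    rintro n E ⟨Eb, hEb, rfl⟩
    show 0 < sdiam (fun a b : X => dist a b) (h ⁻¹' Eb)
    obtain ⟨y0, hy0, y1, hy1, hne⟩ := hcell2 n Eb hEb
    have hx0 : e.symm y0 ∈ h ⁻¹' Eb := by
      rw [hpre]
      exact ⟨y0, hy0, rfl⟩
    have hx1 : e.symm y1 ∈ h ⁻¹' Eb := by
      rw [hpre]
      exact ⟨y1, hy1, rfl⟩
    have hne' : e.symm y0 ≠ e.symm y1 := fun hxy => hne (e.symm.injective hxy)
    have hle := le_sdiam (fun a b : X => dist a b) hBX hx0 hx1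
    exact lt_of_lt_of_le (dist_pos.2 hne') hle
  constructor
  · -- quasisymmetry ⇒ undistorted
    rintro ⟨f, hf, η, hη, hqs⟩
    obtain ⟨ef, hef⟩ := isHomeomorph_iff_exists_homeomorph.1 hf
    have hinjf : Function.Injective f := by
      rw [← hef]; exact ef.injective
    have hmapsX : ∀ n, ∀ E ∈ cellsX n, f '' E ∈ cY.cells n := by
      rintro n E ⟨Eb, hEb, rfl⟩
      show f '' (h ⁻¹' Eb) ∈ CSY.cells n
      have hg : IsHomeomorph (f ∘ ⇑e.symm) := hf.comp e.symm.isHomeomorph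
      have hgcell := hrigid _ hg n Eb hEb
      have himg : f '' (h ⁻¹' Eb) = (f ∘ ⇑e.symm) '' Eb := by
        rw [hpre, Set.image_comp]
      rw [himg]
      exact hgcell
    exact und_of_qs cY cellsX f hinjf hmapsX hcoverX hcompX hposX BX hBX η hη hqs
  · -- undistorted ⇒ quasisymmetry (take f = h)
    intro hundX
    obtain ⟨rX, RX, CX0, δX, hundXw⟩ := hundX
    have cellneX : ∀ n, ∀ E ∈ cellsX n, E.Nonempty := by
      rintro n E ⟨Eb, hEb, rfl⟩
      show (h ⁻¹' Eb).Nonempty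
      obtain ⟨y, hy⟩ := cellneY n Eb hEb
      exact ⟨e.symm y, by rw [hpre]; exact ⟨y, hy, rfl⟩⟩
    have rootmemX : Set.univ ∈ cellsX 0 := by
      refine ⟨Set.univ, rootmemY, ?_⟩
      simp
    set cX : UndCtx X :=
      { cells := cellsX, d := fun a b => dist a b, r := rX, R := RX, C := CX0, δ := δX,
        und := hundXw, met := ⟨fun x y => dist_nonneg, fun x y => dist_eq_zero,
          fun x y => dist_comm x y, fun x y z => dist_triangle x y z⟩,
        B := BX, bdd := hBX,
        cellne := cellneX, cover := hcoverX, rootmem := rootmemX } with hcXdef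
    have hinjh : Function.Injective h := by rw [← he]; exact e.injective
    have hsurjh : Function.Surjective h := by rw [← he]; exact e.surjective
    obtain ⟨η, hη, hqs⟩ := qs_exists cX cY h hinjh hsurjh (fun n => rfl)
    exact ⟨h, hh, η, hη, hqs⟩
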